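/- The map h is injective on N, i.e., for all x, y ∈ N, h(x) = h(y) implies x = y. -/

import Mathlib

theorem stmt_9 {M : Type*} [MetricSpace M] (f g : Equiv.Perm M) (N : Set M)
    (hfN : f '' N = N) (hgN : g '' N = N)
    (h : M → M) (hhN : ∀ x ∈ N, h x ∈ N)
    (hconj : ∀ x ∈ N, h (g x) = f (h x))
    (B : ℝ) (hB : 0 ≤ B) (hclose : ∀ x ∈ N, dist (h x) x ≤ B)
    (r : M → ℤ → ℝ) (hr : ∀ x ∈ N, ∀ n : ℤ, 2 * B < r x n)
    (hexp : ∀ x ∈ N, ∀ y ∈ N,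
      (∀ n : ℤ, dist ((g ^ n) x) ((g ^ n) y) ≤ r x n) → x = y) :
    ∀ x ∈ N, ∀ y ∈ N, h x = h y → x = y := by
  have hgmem : ∀ x ∈ N, g x ∈ N := by
    intro x hx; rw [← hgN]; exact ⟨x, hx, rfl⟩
  have hginv : ∀ x ∈ N, g⁻¹ x ∈ N := by
    intro x hx
    rw [← hgN] at hx
    obtain ⟨z, hz, rfl⟩ := hx
    simpa using hz
  have hconjinv : ∀ x ∈ N, h (g⁻¹ x) = f⁻¹ (h x) := by
    intro x hx
    have := hconj (g⁻¹ x) (hginv x hx)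
    simp only [show g (g⁻¹ x) = x from Equiv.apply_symm_apply g x] at this
    rw [this]; simp
  -- key: for all n, (g^n) x ∈ N ∧ h ((g^n) x) = (f^n) (h x)
  have key : ∀ x ∈ N, ∀ n : ℤ, (g ^ n) x ∈ N ∧ h ((g ^ n) x) = (f ^ n) (h x) := by
    intro x hx
    intro n
    induction n using Int.induction_on with
    | zero => simpa using hx
    | succ n ih =>
      obtain ⟨hmem, heq⟩ := ih
      have e1 : (g ^ ((n : ℤ) + 1)) x = g ((g ^ (n : ℤ)) x) := by
        rw [add_comm, zpow_one_add]; rfl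
      have e2 : (f ^ ((n : ℤ) + 1)) (h x) = f ((f ^ (n : ℤ)) (h x)) := by
        rw [add_comm, zpow_one_add]; rfl
      refine ⟨by rw [e1]; exact hgmem _ hmem, ?_⟩
      rw [e1, e2, hconj _ hmem, heq]
    | pred n ih =>
      obtain ⟨hmem, heq⟩ := ih
      have e1 : (g ^ (-(n : ℤ) - 1)) x = g⁻¹ ((g ^ (-(n : ℤ))) x) := by
        rw [show (-(n:ℤ) - 1) = (-1) + (-(n:ℤ)) by ring, zpow_add, zpow_neg_one]
        rfl
      have e2 : (f ^ (-(n : ℤ) - 1)) (h x) = f⁻¹ ((f ^ (-(n : ℤ))) (h x)) := by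
        rw [show (-(n:ℤ) - 1) = (-1) + (-(n:ℤ)) by ring, zpow_add, zpow_neg_one]
        rfl
      refine ⟨by rw [e1]; exact hginv _ hmem, ?_⟩
      rw [e1, e2, hconjinv _ hmem, heq]
  intro x hx y hy hxy
  apply hexp x hx y hy
  intro n
  obtain ⟨hxn, hxe⟩ := key x hx n
  obtain ⟨hyn, hye⟩ := key y hy n
  have hhe : h ((g ^ n) x) = h ((g ^ n) y) := by rw [hxe, hye, hxy]
  calc dist ((g ^ n) x) ((g ^ n) y)
      ≤ dist ((g ^ n) x) (h ((g ^ n) x)) + dist (h ((g ^ n) x)) ((g ^ n) y) :=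
        dist_triangle _ _ _
    _ ≤ B + B := by
        gcongr
        · rw [dist_comm]; exact hclose _ hxn
        · rw [hhe]; exact hclose _ hyn
    _ = 2 * B := by ring
    _ ≤ r x n := (hr x hx n).le
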